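/- In the setting of the previous statement (V = W ⊕ L, dim V = m+1, ξ regular), the GL(W)-conjugation orbit of ξ is uniquely determined by the 2(m+1) invariants: the coefficients of the characteristic polynomial of ξ and the values e^∨(ξ^i e) for i = 0, 1, …, 2m. More precisely: if ξ, ξ' are both regular and e^∨(ξ^i e) = e^∨(ξ'^i e) for all 0 ≤ i ≤ 2m and ξ, ξ' have the same characteristic polynomial, then there exists h ∈ GL(W) with hξh^{-1} = ξ'. -/

import Mathlib

/-- regular orbits are determined by their invariants, §5.3.
With `V = W ⊕ L`, `dim_F V = m + 1`, `L = F·e` and `e^∨` as in Statement 13, suppose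
`ξ, ξ'` are both regular endomorphisms with the same characteristic polynomial and with
matching invariants `e^∨(ξ^i e) = e^∨(ξ'^i e)` for `0 ≤ i ≤ 2m`.  Then they are conjugate
under `GL(W)`: there is `h ∈ GL(V)` preserving `W`, fixing `L` pointwise, with
`h ξ h⁻¹ = ξ'`. -/
theorem stmt14
    {F V : Type*} [Field F] [AddCommGroup V] [Module F V] [FiniteDimensional F V]
    (m : ℕ) (hdim : Module.finrank F V = m + 1)
    (W L : Submodule F V) (hcompl : IsCompl W L)
    (e : V) (hL : L = Submodule.span F {e})
    (edual : V →ₗ[F] F) (hedual_e : edual e = 1) (hedual_W : ∀ w ∈ W, edual w = 0)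
    (ξ ξ' : V →ₗ[F] V)
    -- regularity of `ξ` and `ξ'` :
    (hreg₁ : Submodule.span F (Set.range fun i : Fin (m + 1) => (ξ ^ (i : ℕ)) e) = ⊤)
    (hreg₂ : Submodule.span F
      (Set.range fun i : Fin (m + 1) => edual ∘ₗ (ξ ^ (i : ℕ))) = ⊤)
    (hreg₁' : Submodule.span F (Set.range fun i : Fin (m + 1) => (ξ' ^ (i : ℕ)) e) = ⊤)
    (hreg₂' : Submodule.span F
      (Set.range fun i : Fin (m + 1) => edual ∘ₗ (ξ' ^ (i : ℕ))) = ⊤)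
    -- matching invariants :
    (hchar : LinearMap.charpoly ξ = LinearMap.charpoly ξ')
    (hinv : ∀ i : ℕ, i ≤ 2 * m → edual ((ξ ^ i) e) = edual ((ξ' ^ i) e)) :
    ∃ h : V ≃ₗ[F] V,
      Submodule.map (h : V →ₗ[F] V) W = W ∧
      (∀ x ∈ L, h x = x) ∧
      (∀ x : V, h (ξ x) = ξ' (h x)) := by
  have hcard : Fintype.card (Fin (m + 1)) = Module.finrank F V := by simp [hdim]
  set b : Module.Basis (Fin (m + 1)) F V :=
    basisOfTopLeSpanOfCardEqFinrank (fun i : Fin (m + 1) => (ξ ^ (i : ℕ)) e)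
      (le_of_eq hreg₁.symm) hcard with hb_def
  set b' : Module.Basis (Fin (m + 1)) F V :=
    basisOfTopLeSpanOfCardEqFinrank (fun i : Fin (m + 1) => (ξ' ^ (i : ℕ)) e)
      (le_of_eq hreg₁'.symm) hcard with hb'_def
  have hb : ∀ i : Fin (m + 1), b i = (ξ ^ (i : ℕ)) e := fun i => by
    rw [hb_def, coe_basisOfTopLeSpanOfCardEqFinrank]
  have hb' : ∀ i : Fin (m + 1), b' i = (ξ' ^ (i : ℕ)) e := fun i => by
    rw [hb'_def, coe_basisOfTopLeSpanOfCardEqFinrank]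
  set h : V ≃ₗ[F] V := b.equiv b' (Equiv.refl _) with hh_def
  -- h sends ξ^j e to ξ'^j e for j ≤ m
  have hpow : ∀ j : ℕ, j ≤ m → h ((ξ ^ j) e) = (ξ' ^ j) e := by
    intro j hj
    have hjlt : j < m + 1 := Nat.lt_succ_of_le hj
    have heq : h (b ⟨j, hjlt⟩) = b' ⟨j, hjlt⟩ := by simp [hh_def]
    rw [hb ⟨j, hjlt⟩, hb' ⟨j, hjlt⟩] at heq
    exact heq
  -- h sends (aeval ξ r) e to (aeval ξ' r) e for r of small degree
  have key : ∀ r : Polynomial F, r.natDegree < m + 1 →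
      h ((Polynomial.aeval ξ r) e) = (Polynomial.aeval ξ' r) e := by
    intro r hr
    rw [Polynomial.as_sum_range' r (m + 1) hr]
    simp only [map_sum, Polynomial.aeval_monomial, LinearMap.coe_sum,
      Finset.sum_apply, Module.End.mul_apply, Module.algebraMap_end_apply, map_smul]
    refine Finset.sum_congr rfl fun j hj => ?_
    rw [hpow j (Nat.lt_succ_iff.mp (Finset.mem_range.mp hj))]
  -- the Cayley-Hamilton step
  have hnd : (LinearMap.charpoly ξ).natDegree = m + 1 := by
    rw [LinearMap.charpoly_natDegree, hdim]
  have hmonic : (LinearMap.charpoly ξ).Monic := LinearMap.charpoly_monic ξ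
  set q : Polynomial F := Polynomial.X ^ (m + 1) - LinearMap.charpoly ξ with hq_def
  have hqdeg : q.natDegree < m + 1 := by
    rcases eq_or_ne q 0 with h0 | h0
    · simp [h0]
    · have hdlt : q.degree < ((m + 1 : ℕ) : WithBot ℕ) := by
        have := Polynomial.degree_sub_lt
          (p := Polynomial.X ^ (m + 1)) (q := LinearMap.charpoly ξ)
          (by rw [Polynomial.degree_X_pow, Polynomial.degree_eq_natDegree hmonic.ne_zero, hnd])
          (pow_ne_zero (m + 1) Polynomial.X_ne_zero)
          (by rw [Polynomial.leadingCoeff_X_pow, hmonic.leadingCoeff])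
        rwa [Polynomial.degree_X_pow] at this
      exact (Polynomial.natDegree_lt_iff_degree_lt h0).mpr hdlt
  have hq : ∀ ζ : V →ₗ[F] V, LinearMap.charpoly ζ = LinearMap.charpoly ξ →
      (Polynomial.aeval ζ q) e = (ζ ^ (m + 1)) e := by
    intro ζ hζ
    have : Polynomial.aeval ζ (LinearMap.charpoly ζ) = 0 :=
      LinearMap.aeval_self_charpoly ζ
    rw [hζ] at this
    simp [hq_def, map_sub, this]
  have hpow' : ∀ j : ℕ, j ≤ m + 1 → h ((ξ ^ j) e) = (ξ' ^ j) e := by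
    intro j hj
    rcases Nat.lt_succ_iff_lt_or_eq.mp (Nat.lt_succ_of_le hj) with hj' | hj'
    · exact hpow j (Nat.lt_succ_iff.mp hj')
    · subst hj'
      rw [← hq ξ rfl, key q hqdeg, hq ξ' hchar.symm]
  -- intertwining on all of V
  have hint : ∀ x : V, h (ξ x) = ξ' (h x) := by
    have : (h : V →ₗ[F] V) ∘ₗ ξ = ξ' ∘ₗ (h : V →ₗ[F] V) := by
      refine b.ext fun i => ?_
      have hi : (i : ℕ) + 1 ≤ m + 1 := Nat.succ_le_succ (Nat.lt_succ_iff.mp i.isLt)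
      simp only [LinearMap.comp_apply, LinearEquiv.coe_coe, hb i]
      rw [show ξ ((ξ ^ (i : ℕ)) e) = (ξ ^ ((i : ℕ) + 1)) e by
            rw [pow_succ', Module.End.mul_apply],
          hpow' _ hi, hpow _ (Nat.lt_succ_iff.mp i.isLt), pow_succ', Module.End.mul_apply]
    intro x
    exact LinearMap.congr_fun this x
  -- h fixes e, hence L pointwise
  have he : h e = e := by simpa using hpow 0 (Nat.zero_le m)
  have hLfix : ∀ x ∈ L, h x = x := by
    intro x hx
    rw [hL, Submodule.mem_span_singleton] at hx
    obtain ⟨c, rfl⟩ := hx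
    rw [map_smul, he]
  -- edual ∘ h = edual
  have hedh : ∀ x : V, edual (h x) = edual x := by
    have : edual ∘ₗ (h : V →ₗ[F] V) = edual := by
      refine b.ext fun i => ?_
      have hi : (i : ℕ) ≤ 2 * m := le_trans (Nat.lt_succ_iff.mp i.isLt) (by omega)
      simp only [LinearMap.comp_apply, LinearEquiv.coe_coe, hb i]
      rw [hpow _ (Nat.lt_succ_iff.mp i.isLt)]
      exact (hinv _ hi).symm
    exact fun x => LinearMap.congr_fun this x
  -- W = ker edual
  have hWker : W = LinearMap.ker edual := by
    have hle : W ≤ LinearMap.ker edual := fun w hw => hedual_W w hw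
    have hLrank : Module.finrank F L = 1 := by
      rw [hL]
      refine finrank_span_singleton ?_
      intro h0
      rw [h0] at hedual_e
      simp at hedual_e
    have hWrank : Module.finrank F W = m := by
      have := Submodule.finrank_add_eq_of_isCompl hcompl
      omega
    have hker : Module.finrank F (LinearMap.ker edual) = m := by
      have hrange : LinearMap.range edual = ⊤ := by
        rw [eq_top_iff]
        intro c _
        exact ⟨c • e, by simp [hedual_e]⟩
      have := LinearMap.finrank_range_add_finrank_ker edual
      rw [hrange] at this
      simp only [finrank_top, Module.finrank_self] at this
      omega
    exact Submodule.eq_of_le_of_finrank_eq hle (by rw [hWrank, hker])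
  -- h maps W onto W
  have hWmap : Submodule.map (h : V →ₗ[F] V) W = W := by
    rw [hWker]
    apply le_antisymm
    · rintro x ⟨w, hw, rfl⟩
      simp only [LinearMap.mem_ker, LinearEquiv.coe_coe] at *
      rw [hedh]; exact hw
    · intro x hx
      refine ⟨h.symm x, ?_, by simp⟩
      have hx0 : edual x = 0 := hx
      have : edual (h (h.symm x)) = 0 := by simpa using hx0
      rw [hedh] at this
      simpa [LinearMap.mem_ker] using this
  exact ⟨h, hWmap, hLfix, hint⟩
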